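/- The row permutation interleaving the two blocks of the Sylvester-Pascal matrix S_m (moving row m to position 1, row m+1 to position 3, etc., preserving relative order otherwise) has sign (−1)^{m(m−1)/2}; hence det(S_m) = (−1)^{m(m−1)/2} det(T_m). -/
import Mathlib

/-- The interleaving permutation on `Fin (2*n)`. -/
def ilv (n : ℕ) : Equiv.Perm (Fin (2 * n)) where
  toFun i := ⟨if (i : ℕ) % 2 = 0 then (i : ℕ) / 2 + n else (i : ℕ) / 2, by
    have := i.isLt; split_ifs <;> omega⟩
  invFun k := ⟨if (k : ℕ) < n then 2 * (k : ℕ) + 1 else 2 * ((k : ℕ) - n), by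
    have := k.isLt; split_ifs <;> omega⟩
  left_inv i := by
    have := i.isLt
    apply Fin.ext
    simp only
    split_ifs <;> omega
  right_inv k := by
    have := k.isLt
    apply Fin.ext
    simp only
    split_ifs <;> omega

lemma ilv_val (n : ℕ) (i : Fin (2 * n)) :
    ((ilv n i : ℕ)) = if (i : ℕ) % 2 = 0 then (i : ℕ) / 2 + n else (i : ℕ) / 2 := rfl

theorem sign_ilv (n : ℕ) : Equiv.Perm.sign (ilv n) = (-1 : ℤˣ) ^ (n * (n + 1) / 2) := by
  induction n with
  | zero =>
    have h0 : ilv 0 = 1 := Equiv.ext fun i => absurd i.isLt (by omega)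
    simp [h0]
  | succ n ih =>
    have hA : 2 * n + 2 = 2 * (n + 1) := by ring
    have hB : n + (n + 2) = 2 * (n + 1) := by ring
    set A : Equiv.Perm (Fin (2 * (n + 1))) :=
      (finCongr hA).permCongr (finSumFinEquiv.permCongr
        (Equiv.sumCongr (ilv n) (1 : Equiv.Perm (Fin 2)))) with hAdef
    set B : Equiv.Perm (Fin (2 * (n + 1))) :=
      (finCongr hB).permCongr (finSumFinEquiv.permCongr
        (Equiv.sumCongr (1 : Equiv.Perm (Fin n)) (finRotate (n + 2)))) with hBdef
    have hAv : ∀ i : Fin (2 * (n + 1)), ((A i : ℕ)) =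
        if (i : ℕ) < 2 * n then
          (if (i : ℕ) % 2 = 0 then (i : ℕ) / 2 + n else (i : ℕ) / 2)
        else (i : ℕ) := by
      intro i
      rw [hAdef]
      simp only [Equiv.permCongr_apply, finCongr_symm, finCongr_apply]
      by_cases h : (i : ℕ) < 2 * n
      · have hx : (Fin.cast hA.symm i) = Fin.castAdd 2 ⟨(i : ℕ), h⟩ := by
          apply Fin.ext; simp
        rw [hx, finSumFinEquiv_symm_apply_castAdd]
        simp [ilv_val, h]
      · have hx : (Fin.cast hA.symm i) = Fin.natAdd (2 * n) ⟨(i : ℕ) - 2 * n, by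
          have := i.isLt; omega⟩ := by
          apply Fin.ext; simp; omega
        rw [hx, finSumFinEquiv_symm_apply_natAdd]
        simp [h]
        omega
    have hBv : ∀ k : Fin (2 * (n + 1)), ((B k : ℕ)) =
        if (k : ℕ) < n then (k : ℕ)
        else (if (k : ℕ) = 2 * n + 1 then n else (k : ℕ) + 1) := by
      intro k
      rw [hBdef]
      simp only [Equiv.permCongr_apply, finCongr_symm, finCongr_apply]
      by_cases h : (k : ℕ) < n
      · have hx : (Fin.cast hB.symm k) = Fin.castAdd (n + 2) ⟨(k : ℕ), h⟩ := by
          apply Fin.ext; simp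
        rw [hx, finSumFinEquiv_symm_apply_castAdd]
        simp [h]
      · have hx : (Fin.cast hB.symm k) = Fin.natAdd n ⟨(k : ℕ) - n, by
          have := k.isLt; omega⟩ := by
          apply Fin.ext; simp; omega
        rw [hx, finSumFinEquiv_symm_apply_natAdd]
        have hlt := k.isLt
        simp only [Equiv.sumCongr_apply, Sum.map_inr, finSumFinEquiv_apply_right,
          finRotate_succ_apply]
        have hval : ∀ y : Fin (n + 2),
            ((Fin.cast hB (Fin.natAdd n y) : ℕ)) = n + (y : ℕ) := fun y => rfl
        rw [hval, Fin.val_add_one, if_neg h]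
        simp only [Fin.ext_iff, Fin.val_last]
        split_ifs <;> omega
    have hprod : ilv (n + 1) = B * A := by
      apply Equiv.ext
      intro i
      apply Fin.ext
      rw [ilv_val]
      show _ = ((B (A i) : ℕ))
      rw [hBv, hAv]
      have hi := i.isLt
      split_ifs <;> omega
    rw [hprod, Equiv.Perm.sign_mul]
    rw [hAdef, hBdef]
    rw [Equiv.Perm.sign_permCongr, Equiv.Perm.sign_permCongr,
      Equiv.Perm.sign_permCongr, Equiv.Perm.sign_permCongr,
      Equiv.Perm.sign_sumCongr, Equiv.Perm.sign_sumCongr,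
      Equiv.Perm.sign_one, Equiv.Perm.sign_one, sign_finRotate, ih]
    rw [one_mul, mul_one, ← pow_add]
    congr 1
    obtain ⟨k, hk⟩ := Nat.even_mul_succ_self n
    have h2 : (n + 1) * (n + 1 + 1) = n * (n + 1) + (n + 1) + (n + 1) := by ring
    omega


/-- `a_i = C(m−1,i)·i!` (with `a_0 = 1`). -/
def pascalA (m i : ℕ) : ℕ := Nat.choose (m - 1) i * i.factorial

/-- `b_i = C(m−1,i)·(i+1)!` (with `b_0 = 1`). -/
def pascalB (m i : ℕ) : ℕ := Nat.choose (m - 1) i * (i + 1).factorial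

/-- The Sylvester-Pascal matrix S_m (a-block rows first, then b-block rows). -/
def sylvesterPascal (m : ℕ) : Matrix (Fin (2 * (m - 1))) (Fin (2 * (m - 1))) ℝ :=
  Matrix.of fun i j =>
    if (i : ℕ) < m - 1 then
      (if (i : ℕ) ≤ (j : ℕ) ∧ (j : ℕ) ≤ (i : ℕ) + (m - 1) then
        (pascalA m ((j : ℕ) - (i : ℕ)) : ℝ) else 0)
    else
      (if (i : ℕ) - (m - 1) ≤ (j : ℕ) ∧ (j : ℕ) ≤ (i : ℕ) - (m - 1) + (m - 1) then
        (pascalB m ((j : ℕ) - ((i : ℕ) - (m - 1))) : ℝ) else 0)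

/-- The interleaved matrix T_m, with rows r_m, r_1, r_{m+1}, r_2, …, r_{2m−2}, r_{m−1}
of S_m. -/
def tMatPascal (m : ℕ) : Matrix (Fin (2 * (m - 1))) (Fin (2 * (m - 1))) ℝ :=
  Matrix.of fun i j =>
    if (i : ℕ) / 2 ≤ (j : ℕ) ∧ (j : ℕ) ≤ (i : ℕ) / 2 + (m - 1) then
      (if (i : ℕ) % 2 = 0 then (pascalB m ((j : ℕ) - (i : ℕ) / 2) : ℝ)
        else (pascalA m ((j : ℕ) - (i : ℕ) / 2) : ℝ))
    else 0

/-- The row permutation interleaving the two blocks of S_m (sending the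
row at position i of T_m to the row of S_m at position (m−1) + i/2 if i is even, and
i/2 if i is odd, in 0-based indexing) has sign (−1)^{m(m−1)/2}; hence
det S_m = (−1)^{m(m−1)/2} · det T_m. -/
theorem sign_interleave_and_det (m : ℕ) (hm : 2 ≤ m)
    (σ : Equiv.Perm (Fin (2 * (m - 1))))
    (hσ : ∀ i : Fin (2 * (m - 1)),
      ((σ i : ℕ)) = if (i : ℕ) % 2 = 0 then (i : ℕ) / 2 + (m - 1) else (i : ℕ) / 2) :
    Equiv.Perm.sign σ = ((-1 : ℤˣ)) ^ (m * (m - 1) / 2) ∧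
    (sylvesterPascal m).det = (-1 : ℝ) ^ (m * (m - 1) / 2) * (tMatPascal m).det := by
  have hσeq : σ = ilv (m - 1) := by
    apply Equiv.ext
    intro i
    apply Fin.ext
    rw [hσ i, ilv_val]
  have hexp : (m - 1) * ((m - 1) + 1) / 2 = m * (m - 1) / 2 := by
    have h1 : (m - 1) + 1 = m := by omega
    rw [h1, Nat.mul_comm]
  have hsign : Equiv.Perm.sign σ = ((-1 : ℤˣ)) ^ (m * (m - 1) / 2) := by
    rw [hσeq, sign_ilv, hexp]
  refine ⟨hsign, ?_⟩
  have hsub : tMatPascal m = (sylvesterPascal m).submatrix σ id := by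
    ext i j
    have hi : (i : ℕ) < 2 * (m - 1) := i.isLt
    rw [Matrix.submatrix_apply, id_eq]
    show (tMatPascal m) i j = (sylvesterPascal m) (σ i) j
    unfold tMatPascal sylvesterPascal
    rw [Matrix.of_apply, Matrix.of_apply]
    by_cases hp : (i : ℕ) % 2 = 0
    · have hv : ((σ i : ℕ)) = (i : ℕ) / 2 + (m - 1) := by rw [hσ i, if_pos hp]
      rw [hv]
      have h1 : ¬ ((i : ℕ) / 2 + (m - 1) < m - 1) := by omega
      rw [if_neg h1]
      have h2 : (i : ℕ) / 2 + (m - 1) - (m - 1) = (i : ℕ) / 2 := by omega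
      rw [h2, if_pos hp]
    · have hv : ((σ i : ℕ)) = (i : ℕ) / 2 := by rw [hσ i, if_neg hp]
      rw [hv]
      have h1 : (i : ℕ) / 2 < m - 1 := by omega
      rw [if_pos h1, if_neg hp]
  have hcast : ((((Equiv.Perm.sign σ : ℤˣ) : ℤ)) : ℝ) = (-1 : ℝ) ^ (m * (m - 1) / 2) := by
    rw [hsign]
    push_cast
    norm_num
  have hdet : (tMatPascal m).det
      = (-1 : ℝ) ^ (m * (m - 1) / 2) * (sylvesterPascal m).det := by
    rw [hsub, Matrix.det_permute, hcast]
  rw [hdet, ← mul_assoc, ← pow_add]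
  rw [Even.neg_one_pow ⟨_, rfl⟩, one_mul]
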